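/- Let W : ℝ → ℝ be even (W(−z) = W(z) for all z) and nondecreasing on [0,∞), and let r₁, r₂ > 0. Then for all real numbers d, d' with |d| ≤ |d'|, ∫_{−r₁}^{r₁} ∫_{−r₂}^{r₂} W(x − y − d) dy dx ≤ ∫_{−r₁}^{r₁} ∫_{−r₂}^{r₂} W(x − y − d') dy dx. Consequently, the interaction integral ∫_{c₁−r₁}^{c₁+r₁} ∫_{c₂−r₂}^{c₂+r₂} W(u − v) dv du between two intervals depends only on the distance |c₁ − c₂| between their centers and is nondecreasing in it. -/

import Mathlib

open MeasureTheory Set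

private lemma aux_abs (W : ℝ → ℝ) (heven : ∀ z : ℝ, W (-z) = W z)
    (hmono : MonotoneOn W (Ici 0)) {a b : ℝ} (h : |a| ≤ b) : W a ≤ W b := by
  have h1 : W a = W |a| := by
    rcases abs_choice a with h' | h'
    · rw [h']
    · rw [h', heven]
  rw [h1]
  exact hmono (abs_nonneg a) (le_trans (abs_nonneg a) h) h

private lemma aux_meas (W : ℝ → ℝ) (heven : ∀ z : ℝ, W (-z) = W z)
    (hmono : MonotoneOn W (Ici 0)) : Measurable W := by
  have hU : Monotone (fun x : ℝ => W (max x 0)) := by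
    intro x y hxy
    exact hmono (le_max_right x 0) (le_max_right y 0) (max_le_max hxy le_rfl)
  have hWU : W = (fun x : ℝ => W (max x 0)) ∘ (fun x : ℝ => |x|) := by
    funext x
    simp only [Function.comp]
    rw [max_eq_left (abs_nonneg x)]
    rcases abs_choice x with h' | h'
    · rw [h']
    · rw [h', heven]
  rw [hWU]
  exact hU.measurable.comp measurable_abs

private lemma aux_int (W : ℝ → ℝ) (heven : ∀ z : ℝ, W (-z) = W z)
    (hmono : MonotoneOn W (Ici 0)) (a b : ℝ) : IntervalIntegrable W volume a b := by
  rw [intervalIntegrable_iff]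
  set M : ℝ := max |a| |b| with hM
  have hbound : ∀ x ∈ uIoc a b, ‖W x‖ ≤ max |W 0| |W M| := by
    intro x hx
    have hxM : |x| ≤ M := by
      rcases le_total a b with hab | hab
      · rw [uIoc_of_le hab] at hx
        rw [abs_le]
        constructor
        · calc -M ≤ -|a| := neg_le_neg (le_max_left _ _)
            _ ≤ a := neg_abs_le a
            _ ≤ x := le_of_lt hx.1
        · calc x ≤ b := hx.2
            _ ≤ |b| := le_abs_self b
            _ ≤ M := le_max_right _ _
      · rw [uIoc_of_ge hab] at hx
        rw [abs_le]
        constructor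
        · calc -M ≤ -|b| := neg_le_neg (le_max_right _ _)
            _ ≤ b := neg_abs_le b
            _ ≤ x := le_of_lt hx.1
        · calc x ≤ a := hx.2
            _ ≤ |a| := le_abs_self a
            _ ≤ M := le_max_left _ _
    have h1 : W 0 ≤ W x := by
      have h0 : W 0 ≤ W |x| := aux_abs W heven hmono (by simp)
      rcases abs_choice x with h' | h'
      · rwa [h'] at h0
      · rw [h'] at h0; rwa [heven] at h0
    have h2 : W x ≤ W M := aux_abs W heven hmono hxM
    rw [Real.norm_eq_abs, abs_le]
    constructor
    · calc -(max |W 0| |W M|) ≤ -|W 0| := neg_le_neg (le_max_left _ _)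
        _ ≤ W 0 := neg_abs_le _
        _ ≤ W x := h1
    · calc W x ≤ W M := h2
        _ ≤ |W M| := le_abs_self _
        _ ≤ max |W 0| |W M| := le_max_right _ _
  exact Measure.integrableOn_of_bounded measure_Ioc_lt_top.ne
    ((aux_meas W heven hmono).aestronglyMeasurable)
    (ae_restrict_of_forall_mem measurableSet_uIoc hbound)

private lemma aux_even (W : ℝ → ℝ) (heven : ∀ z : ℝ, W (-z) = W z) (r : ℝ) (t : ℝ) :
    (∫ u in (-t - r)..(-t + r), W u) = ∫ u in (t - r)..(t + r), W u := by
  have h := intervalIntegral.integral_comp_neg (a := t - r) (b := t + r) W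
  calc (∫ u in (-t - r)..(-t + r), W u)
      = ∫ u in (-(t + r))..(-(t - r)), W u := by ring_nf
    _ = ∫ u in (t - r)..(t + r), W (-u) := h.symm
    _ = ∫ u in (t - r)..(t + r), W u := by simp only [heven]

private lemma aux_mono (W : ℝ → ℝ) (heven : ∀ z : ℝ, W (-z) = W z)
    (hmono : MonotoneOn W (Ici 0)) (r : ℝ) (hr : 0 < r) :
    MonotoneOn (fun t => ∫ u in (t - r)..(t + r), W u) (Ici 0) := by
  intro s hs t ht hst
  simp only
  have int := aux_int W heven hmono
  have h1 : (∫ u in (s - r)..(t + r), W u)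
      = (∫ u in (s - r)..(s + r), W u) + ∫ u in (s + r)..(t + r), W u :=
    (intervalIntegral.integral_add_adjacent_intervals (int _ _) (int _ _)).symm
  have h2 : (∫ u in (s - r)..(t + r), W u)
      = (∫ u in (s - r)..(t - r), W u) + ∫ u in (t - r)..(t + r), W u :=
    (intervalIntegral.integral_add_adjacent_intervals (int _ _) (int _ _)).symm
  have h3 : (∫ u in (s - r)..(t - r), W u) = ∫ u in (s + r)..(t + r), W (u - 2 * r) := by
    rw [intervalIntegral.integral_comp_sub_right W (2 * r)]
    congr 1 <;> ring
  have hint' : IntervalIntegrable (fun u => W (u - 2 * r)) volume (s + r) (t + r) := by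
    have := (int (s + r - 2 * r) (t + r - 2 * r)).comp_sub_right (2 * r)
    simpa using this
  have h4 : (∫ u in (s + r)..(t + r), W (u - 2 * r)) ≤ ∫ u in (s + r)..(t + r), W u := by
    apply intervalIntegral.integral_mono_on (by linarith [mem_Ici.mp hs, mem_Ici.mp ht])
      hint' (int _ _)
    intro u hu
    apply aux_abs W heven hmono
    rw [abs_le]
    have := mem_Ici.mp hs
    exact ⟨by linarith [hu.1], by linarith⟩
  linarith

/-- Lemma 4.5: the interaction integral between two intervals is nondecreasing in
the distance between their centers. -/
theorem stmt_9 (W : ℝ → ℝ)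
    (heven : ∀ z : ℝ, W (-z) = W z)
    (hmono : MonotoneOn W (Ici 0))
    (r₁ r₂ : ℝ) (hr₁ : 0 < r₁) (hr₂ : 0 < r₂) :
    ∀ d d' : ℝ, |d| ≤ |d'| →
      (∫ x in (-r₁)..r₁, ∫ y in (-r₂)..r₂, W (x - y - d)) ≤
        ∫ x in (-r₁)..r₁, ∫ y in (-r₂)..r₂, W (x - y - d') := by
  intro d d' hdd
  set G₂ : ℝ → ℝ := fun t => ∫ u in (t - r₂)..(t + r₂), W u with hG₂
  have heven₂ : ∀ z : ℝ, G₂ (-z) = G₂ z := fun z => aux_even W heven r₂ z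
  have hmono₂ : MonotoneOn G₂ (Ici 0) := aux_mono W heven hmono r₂ hr₂
  set G₁ : ℝ → ℝ := fun t => ∫ u in (t - r₁)..(t + r₁), G₂ u with hG₁
  have heven₁ : ∀ z : ℝ, G₁ (-z) = G₁ z := fun z => aux_even G₂ heven₂ r₁ z
  have hmono₁ : MonotoneOn G₁ (Ici 0) := aux_mono G₂ heven₂ hmono₂ r₁ hr₁
  have key : ∀ c : ℝ, (∫ x in (-r₁)..r₁, ∫ y in (-r₂)..r₂, W (x - y - c)) = G₁ c := by
    intro c
    have hinner : ∀ x : ℝ, (∫ y in (-r₂)..r₂, W (x - y - c)) = G₂ (x - c) := by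
      intro x
      have : ∀ y : ℝ, W (x - y - c) = W ((x - c) - y) := by intro y; ring_nf
      simp_rw [this]
      rw [intervalIntegral.integral_comp_sub_left W (x - c)]
      simp only [hG₂]
      congr 1 <;> ring
    simp_rw [hinner]
    rw [intervalIntegral.integral_comp_sub_right G₂ c]
    have : (∫ u in (-r₁ - c)..(r₁ - c), G₂ u) = G₁ (-c) := by
      simp only [hG₁]
      congr 1 <;> ring
    rw [this, heven₁]
  rw [key d, key d']
  have h1 : G₁ d ≤ G₁ |d'| := aux_abs G₁ heven₁ hmono₁ hdd
  have h2 : G₁ |d'| = G₁ d' := by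
    rcases abs_choice d' with h' | h'
    · rw [h']
    · rw [h', heven₁]
  linarith
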